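/- arXiv:1303.0808 — 4 statements merged into one kernel-verified Lean document; each statement's English description precedes it below -/
import Mathlib

section
/- Let σ be a d×d positive semidefinite complex matrix with Tr σ ≤ 1 (a subnormalized state), and let Π₁, …, Π_M be orthogonal projection matrices (Hermitian with Π² = Π) on ℂ^d. Then Tr{σ} − Tr{Π_M ⋯ Π₁ σ Π₁ ⋯ Π_M} ≤ 2·√( Σ_{m=1}^{M} Tr{(I − Π_m) σ} ). -/
open Matrix ComplexOrder
namespace SenAux

variable {d : ℕ}

noncomputable def e (A : Matrix (Fin d) (Fin d) ℂ) : EuclideanSpace ℂ (Fin d × Fin d) :=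
  (WithLp.equiv 2 _).symm (fun p => A p.1 p.2)

lemma e_sub (A B : Matrix (Fin d) (Fin d) ℂ) : e (A - B) = e A - e B := rfl
lemma e_add (A B : Matrix (Fin d) (Fin d) ℂ) : e (A + B) = e A + e B := rfl

lemma inner_e (A B : Matrix (Fin d) (Fin d) ℂ) :
    (inner ℂ (e A) (e B) : ℂ) = (Aᴴ * B).trace := by
  simp only [e, PiLp.inner_apply, RCLike.inner_apply, WithLp.equiv_symm_apply, PiLp.toLp_apply,
    Matrix.trace, Matrix.diag, Matrix.mul_apply, Matrix.conjTranspose_apply]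
  rw [Fintype.sum_prod_type]
  rw [Finset.sum_comm]
  simp [mul_comm]

lemma norm_sq_e (A : Matrix (Fin d) (Fin d) ℂ) :
    ‖e A‖ ^ 2 = ((Aᴴ * A).trace).re := by
  rw [norm_sq_eq_re_inner (𝕜 := ℂ), inner_e]; rfl

end SenAux

namespace SenAux2
open SenAux

variable {d : ℕ}

lemma orth {Q : Matrix (Fin d) (Fin d) ℂ} (hQh : Qᴴ = Q) (hQp : Q * Q = Q)
    (A B : Matrix (Fin d) (Fin d) ℂ) : (((1 - Q) * A)ᴴ * (Q * B)).trace = 0 := by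
  have h0 : Aᴴ * (1 - Q)ᴴ * (Q * B) = 0 := by
    rw [Matrix.conjTranspose_sub, Matrix.conjTranspose_one, hQh]
    have : (1 - Q) * Q = 0 := by rw [sub_mul, one_mul, hQp, sub_self]
    calc Aᴴ * (1 - Q) * (Q * B) = Aᴴ * ((1 - Q) * Q) * B := by noncomm_ring
      _ = 0 := by rw [this, mul_zero, zero_mul]
  rw [Matrix.conjTranspose_mul, h0, Matrix.trace_zero]

lemma pyth {A B : Matrix (Fin d) (Fin d) ℂ} (h : (Aᴴ * B).trace = 0) :
    ‖e A + e B‖ ^ 2 = ‖e A‖ ^ 2 + ‖e B‖ ^ 2 := by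
  rw [norm_add_sq (𝕜 := ℂ), inner_e, h]
  simp

lemma contract {Q : Matrix (Fin d) (Fin d) ℂ} (hQh : Qᴴ = Q) (hQp : Q * Q = Q)
    (Z : Matrix (Fin d) (Fin d) ℂ) : ‖e (Q * Z)‖ ^ 2 ≤ ‖e Z‖ ^ 2 := by
  have hm : (1 - Q) * Z + Q * Z = Z := by noncomm_ring
  have hz : e ((1 - Q) * Z) + e (Q * Z) = e Z := by rw [← e_add, hm]
  have h := pyth (orth hQh hQp Z Z)
  rw [hz] at h
  nlinarith [sq_nonneg ‖e ((1 - Q) * Z)‖]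

lemma key (R : Matrix (Fin d) (Fin d) ℂ) (l : List (Matrix (Fin d) (Fin d) ℂ))
    (hl : ∀ Q ∈ l, Qᴴ = Q ∧ Q * Q = Q) :
    ‖e R - e (l.prod * R)‖ ^ 2 ≤ (l.map (fun Q => ‖e ((1 - Q) * R)‖ ^ 2)).sum := by
  induction l with
  | nil => simp
  | cons Q t ih =>
    obtain ⟨hQh, hQp⟩ := hl Q List.mem_cons_self
    have ht := fun Q hQ => hl Q (List.mem_cons_of_mem _ hQ)
    have hm : R - (Q :: t).prod * R = (1 - Q) * R + Q * (R - t.prod * R) := by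
      simp only [List.prod_cons]; noncomm_ring
    have hd : e R - e ((Q :: t).prod * R)
        = e ((1 - Q) * R) + e (Q * (R - t.prod * R)) := by
      rw [← e_sub, ← e_add, hm]
    rw [hd, pyth (orth hQh hQp R (R - t.prod * R))]
    simp only [List.map_cons, List.sum_cons]
    have h1 := contract hQh hQp (R - t.prod * R)
    rw [e_sub] at h1
    linarith [ih ht]

lemma key2 (R : Matrix (Fin d) (Fin d) ℂ) (l : List (Matrix (Fin d) (Fin d) ℂ))
    (hl : ∀ Q ∈ l, Qᴴ = Q ∧ Q * Q = Q) :
    ‖e (l.prod * R)‖ ^ 2 ≤ ‖e R‖ ^ 2 := by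
  induction l with
  | nil => simp
  | cons Q t ih =>
    obtain ⟨hQh, hQp⟩ := hl Q List.mem_cons_self
    have ht := fun Q hQ => hl Q (List.mem_cons_of_mem _ hQ)
    rw [List.prod_cons, mul_assoc]
    exact le_trans (contract hQh hQp _) (ih ht)

end SenAux2

open SenAux SenAux2 in
/-- **Sen's non-commutative union bound.**
For a subnormalized state `σ` (positive semidefinite with `Tr σ ≤ 1`) and orthogonal
projections `Π₁, …, Π_M`, we have
`Tr σ − Tr (Π_M ⋯ Π₁ σ Π₁ ⋯ Π_M) ≤ 2 √(∑ₘ Tr ((I − Π_m) σ))`. -/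
theorem sen_noncommutative_union_bound {d M : ℕ}
    (σ : Matrix (Fin d) (Fin d) ℂ) (hσ : σ.PosSemidef) (hσtr : σ.trace.re ≤ 1)
    (P : Fin M → Matrix (Fin d) (Fin d) ℂ)
    (hherm : ∀ m, (P m).IsHermitian) (hproj : ∀ m, P m * P m = P m) :
    σ.trace.re - ((List.ofFn P).reverse.prod * σ * (List.ofFn P).prod).trace.re
      ≤ 2 * Real.sqrt (∑ m, (((1 : Matrix (Fin d) (Fin d) ℂ) - P m) * σ).trace.re) := by
  obtain ⟨R, hRsa, -, hRR⟩ := open scoped MatrixOrder in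
    CFC.exists_sqrt_of_isSelfAdjoint_of_quasispectrumRestricts hσ.isHermitian
      (QuasispectrumRestricts.nnreal_of_nonneg hσ.nonneg)
  have hRh : Rᴴ = R := hRsa
  set l := (List.ofFn P).reverse with hldef
  have hlmem : ∀ Q ∈ l, Qᴴ = Q ∧ Q * Q = Q := by
    intro Q hQ
    rw [hldef, List.mem_reverse, List.mem_ofFn] at hQ
    obtain ⟨m, rfl⟩ := hQ
    exact ⟨hherm m, hproj m⟩
  set B := l.prod with hBdef
  have hBC : Bᴴ = (List.ofFn P).prod := by
    rw [hBdef, Matrix.conjTranspose_list_prod, hldef, List.map_reverse,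
      List.map_ofFn, List.reverse_reverse]
    have hc : conjTranspose ∘ P = P := funext fun m => (hherm m).eq
    rw [hc]
  -- trace identities
  have h1 : σ.trace.re = ‖e R‖ ^ 2 := by
    rw [norm_sq_e, hRh, hRR]
  have h2 : (B * σ * (List.ofFn P).prod).trace.re = ‖e (B * R)‖ ^ 2 := by
    rw [norm_sq_e, Matrix.conjTranspose_mul, hRh, hBC]
    have : B * σ * (List.ofFn P).prod = (B * R) * (R * (List.ofFn P).prod) := by
      rw [← hRR]; noncomm_ring
    rw [this, Matrix.trace_mul_comm]
  have h3 : ∀ m : Fin M, (((1 : Matrix (Fin d) (Fin d) ℂ) - P m) * σ).trace.re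
      = ‖e ((1 - P m) * R)‖ ^ 2 := by
    intro m
    have hid : ((1 : Matrix (Fin d) (Fin d) ℂ) - P m) * (1 - P m) = 1 - P m := by
      calc (1 - P m) * (1 - P m) = 1 - P m - P m + P m * P m := by noncomm_ring
        _ = 1 - P m := by rw [hproj m]; noncomm_ring
    rw [norm_sq_e, Matrix.conjTranspose_mul, hRh, Matrix.conjTranspose_sub,
      Matrix.conjTranspose_one, (hherm m).eq]
    have : R * (1 - P m) * ((1 - P m) * R) = R * ((1 - P m) * R) := by
      calc R * (1 - P m) * ((1 - P m) * R) = R * ((1 - P m) * (1 - P m)) * R := by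
            noncomm_ring
        _ = R * ((1 - P m) * R) := by rw [hid]; noncomm_ring
    rw [this, Matrix.trace_mul_comm R ((1 - P m) * R), mul_assoc, hRR]
  have hS : (∑ m, (((1 : Matrix (Fin d) (Fin d) ℂ) - P m) * σ).trace.re)
      = (l.map (fun Q => ‖e ((1 - Q) * R)‖ ^ 2)).sum := by
    rw [hldef, List.map_reverse, List.sum_reverse, List.map_ofFn, List.sum_ofFn]
    exact Finset.sum_congr rfl (fun m _ => h3 m)
  rw [h1, h2, hS]
  -- final arithmetic
  have hkey := key R l hlmem
  have hkey2 := key2 R l hlmem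
  set a := ‖e R‖
  set b := ‖e (B * R)‖
  set D := ‖e R - e (B * R)‖
  set S := (l.map (fun Q => ‖e ((1 - Q) * R)‖ ^ 2)).sum
  have ha1 : a ^ 2 ≤ 1 := by rw [← h1]; exact hσtr
  have hba : b ^ 2 ≤ a ^ 2 := hkey2
  have hab : a - b ≤ D := norm_sub_norm_le _ _
  have hDS : D ≤ Real.sqrt S := by
    rw [show D = Real.sqrt (D ^ 2) from (Real.sqrt_sq (norm_nonneg _)).symm]
    exact Real.sqrt_le_sqrt hkey
  have ha0 : 0 ≤ a := norm_nonneg _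
  have hb0 : 0 ≤ b := norm_nonneg _
  have hD0 : 0 ≤ D := norm_nonneg _
  have ha : a ≤ 1 := by nlinarith
  have hb : b ≤ a := by nlinarith
  nlinarith [Real.sqrt_nonneg S]
end

section
/- Let σ be a d×d positive semidefinite complex matrix with Tr σ ≤ 1 (a subnormalized state), and let Λ₁, …, Λ_M be d×d complex matrices with 0 ≤ Λ_m ≤ I for all m ∈ {1,…,M}. Then there exist orthogonal projections Π₁, …, Π_M on the extended space ℂ^d ⊗ (ℂ²)^{⊗M} satisfying Tr{Π_m (τ ⊗ |0̄⟩⟨0̄|)} = Tr{Λ_m τ} for every d×d matrix τ (where |0̄⟩ = |0⟩^{⊗M} is the all-zeros state of M qubit probes), such that Tr{σ} − Tr{Π_M ⋯ Π₁ (σ ⊗ |0̄⟩⟨0̄|) Π₁ ⋯ Π_M} ≤ 2·√( Σ_{m=1}^{M} Tr{(I − Λ_m) σ} ). -/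
open Matrix Kronecker ComplexOrder

/-- The projection `|0̄⟩⟨0̄|` onto the all-zeros computational basis state of `M` qubit
probe systems. -/
def probeZero (M : ℕ) : Matrix (Fin M → Fin 2) (Fin M → Fin 2) ℂ :=
  Matrix.single (fun _ => 0) (fun _ => 0) 1

section Aux

set_option linter.unusedSectionVars false

variable {n : Type*} [Fintype n] [DecidableEq n]

noncomputable def toE (v : n → ℂ) : EuclideanSpace ℂ n := (WithLp.equiv 2 (n → ℂ)).symm v

lemma toE_add (v w : n → ℂ) : toE (v + w) = toE v + toE w := rfl

lemma inner_toE (v w : n → ℂ) : (inner ℂ (toE v) (toE w) : ℂ) = dotProduct (star v) w := by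
  rw [dotProduct_comm]; rfl

lemma norm_toE_sq (v : n → ℂ) : ‖toE v‖ ^ 2 = (dotProduct (star v) v).re := by
  rw [← inner_self_eq_norm_sq (𝕜 := ℂ), inner_toE]
  rfl

lemma adj_dot (A : Matrix n n ℂ) (v w : n → ℂ) :
    dotProduct (star (A *ᵥ v)) w = dotProduct (star v) (Aᴴ *ᵥ w) := by
  rw [star_mulVec, ← dotProduct_mulVec]

/-- projections contract -/
lemma proj_contract {P : Matrix n n ℂ} (hh : Pᴴ = P) (hp : P * P = P) (v : n → ℂ) :
    ‖toE (P *ᵥ v)‖ ≤ ‖toE v‖ := by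
  have hdecomp : v = P *ᵥ v + ((1 : Matrix n n ℂ) - P) *ᵥ v := by
    rw [Matrix.sub_mulVec, Matrix.one_mulVec]; abel
  have horth : (inner ℂ (toE (P *ᵥ v)) (toE (((1 : Matrix n n ℂ) - P) *ᵥ v)) : ℂ) = 0 := by
    rw [inner_toE, adj_dot, hh, Matrix.mulVec_mulVec,
      Matrix.mul_sub, Matrix.mul_one, hp, sub_self, Matrix.zero_mulVec,
      dotProduct_zero]
  have hpyth : ‖toE v‖ ^ 2 = ‖toE (P *ᵥ v)‖ ^ 2 + ‖toE (((1:Matrix n n ℂ) - P) *ᵥ v)‖ ^ 2 := by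
    conv_lhs => rw [hdecomp, toE_add]
    rw [norm_add_sq (𝕜 := ℂ), horth]
    simp
  have h1 : ‖toE (P *ᵥ v)‖ ^ 2 ≤ ‖toE v‖ ^ 2 := by
    nlinarith [sq_nonneg ‖toE (((1:Matrix n n ℂ) - P) *ᵥ v)‖]
  have := Real.sqrt_le_sqrt h1
  rwa [Real.sqrt_sq (norm_nonneg _), Real.sqrt_sq (norm_nonneg _)] at this

lemma prod_contract (L : List (Matrix n n ℂ)) (h : ∀ p ∈ L, pᴴ = p ∧ p * p = p) (v : n → ℂ) :
    ‖toE (L.prod *ᵥ v)‖ ≤ ‖toE v‖ := by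
  induction L generalizing v with
  | nil => simp [Matrix.one_mulVec]
  | cons p T ih =>
      rw [List.prod_cons, ← Matrix.mulVec_mulVec]
      calc ‖toE (p *ᵥ (T.prod *ᵥ v))‖ ≤ ‖toE (T.prod *ᵥ v)‖ :=
            proj_contract (h p (by simp)).1 (h p (by simp)).2 _
        _ ≤ ‖toE v‖ := ih (fun q hq => h q (by simp [hq])) v

/-- Sen's key lemma -/
lemma sen_key (L : List (Matrix n n ℂ)) (h : ∀ p ∈ L, pᴴ = p ∧ p * p = p) (v : n → ℂ) :
    ‖toE (((1 : Matrix n n ℂ) - L.prod) *ᵥ v)‖ ^ 2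
      ≤ (L.map (fun p => ‖toE (((1 : Matrix n n ℂ) - p) *ᵥ v)‖ ^ 2)).sum := by
  induction L with
  | nil => simp [Matrix.zero_mulVec, toE]
  | cons p T ih =>
      have hp := h p (by simp)
      have key : (1 : Matrix n n ℂ) - (p :: T).prod
          = ((1 : Matrix n n ℂ) - p) + p * ((1 : Matrix n n ℂ) - T.prod) := by
        rw [List.prod_cons, Matrix.mul_sub, Matrix.mul_one]; abel
      rw [key, Matrix.add_mulVec, toE_add]
      have horth : (inner ℂ (toE (((1 : Matrix n n ℂ) - p) *ᵥ v))
          (toE ((p * ((1 : Matrix n n ℂ) - T.prod)) *ᵥ v)) : ℂ) = 0 := by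
        rw [inner_toE, adj_dot, Matrix.mulVec_mulVec]
        have : ((1 : Matrix n n ℂ) - p)ᴴ * (p * ((1 : Matrix n n ℂ) - T.prod))
            = ((1 - p) * p) * (1 - T.prod) := by
          rw [Matrix.conjTranspose_sub, Matrix.conjTranspose_one, hp.1, mul_assoc]
        rw [this, Matrix.sub_mul, Matrix.one_mul, hp.2, sub_self, Matrix.zero_mul,
          Matrix.zero_mulVec, dotProduct_zero]
      rw [norm_add_sq (𝕜 := ℂ), horth]
      simp only [map_zero, mul_zero, add_zero, List.map_cons, List.sum_cons]
      have h2 : ‖toE ((p * ((1 : Matrix n n ℂ) - T.prod)) *ᵥ v)‖ ^ 2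
          ≤ (T.map (fun q => ‖toE (((1 : Matrix n n ℂ) - q) *ᵥ v)‖ ^ 2)).sum := by
        refine le_trans ?_ (ih (fun q hq => h q (by simp [hq])))
        rw [← Matrix.mulVec_mulVec]
        have := proj_contract hp.1 hp.2 (((1 : Matrix n n ℂ) - T.prod) *ᵥ v)
        nlinarith [norm_nonneg (toE ((p *ᵥ (((1 : Matrix n n ℂ) - T.prod) *ᵥ v)))),
          norm_nonneg (toE ((((1 : Matrix n n ℂ) - T.prod) *ᵥ v)))]
      linarith

lemma trace_conjTranspose_mul_self_re (A : Matrix n n ℂ) :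
    (Aᴴ * A).trace.re = ∑ j, ‖toE (fun i => A i j)‖ ^ 2 := by
  have : (Aᴴ * A).trace = ∑ j, dotProduct (star (fun i => A i j)) (fun i => A i j) := by
    rw [Matrix.trace]
    refine Finset.sum_congr rfl fun j _ => ?_
    simp [Matrix.mul_apply, Matrix.diag, dotProduct, Matrix.conjTranspose_apply]
  rw [this, Complex.re_sum]
  exact Finset.sum_congr rfl fun j _ => (norm_toE_sq _).symm

lemma col_mul (A B : Matrix n n ℂ) (j : n) :
    (fun i => (A * B) i j) = A *ᵥ (fun i => B i j) := by
  funext i; simp [Matrix.mul_apply, Matrix.mulVec, dotProduct]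

lemma reverse_prod_conjTranspose (L : List (Matrix n n ℂ)) (h : ∀ p ∈ L, pᴴ = p) :
    (L.reverse.prod)ᴴ = L.prod := by
  induction L with
  | nil => simp
  | cons p T ih =>
      rw [List.reverse_cons, List.prod_append, List.prod_cons, List.prod_nil, mul_one,
        Matrix.conjTranspose_mul, h p (by simp), List.prod_cons,
        ih (fun q hq => h q (by simp [hq]))]

lemma kron_conjTranspose {m : Type*} [Fintype m] (A : Matrix n n ℂ) (B : Matrix m m ℂ) :
    (A ⊗ₖ B)ᴴ = Aᴴ ⊗ₖ Bᴴ := by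
  ext ⟨i, k⟩ ⟨j, l⟩
  simp [Matrix.conjTranspose_apply, Matrix.kroneckerMap_apply, mul_comm]

lemma trace_submatrix_equiv' {m : Type*} [Fintype m] [DecidableEq m] (e : m ≃ n)
    (A : Matrix n n ℂ) : (A.submatrix ⇑e ⇑e).trace = A.trace := by
  rw [Matrix.trace, Matrix.trace]
  exact Equiv.sum_comp e (fun j => A j j)

lemma exists_offdiag (Λ : Matrix n n ℂ) (hΛ : Λ.PosSemidef)
    (hΛI : ((1 : Matrix n n ℂ) - Λ).PosSemidef) :
    ∃ C : Matrix n n ℂ, Cᴴ = C ∧ C * C = Λ - Λ * Λ ∧ C * Λ = Λ * C := by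
  have hH : Λ.IsHermitian := hΛ.1
  set U : Matrix n n ℂ := (hH.eigenvectorUnitary : Matrix n n ℂ) with hU
  have hUU : star U * U = 1 := (Unitary.mem_iff.mp hH.eigenvectorUnitary.2).1
  set ev : n → ℝ := hH.eigenvalues with hev
  have hev0 : ∀ i, 0 ≤ ev i := fun i => hΛ.eigenvalues_nonneg i
  have hev1 : ∀ i, ev i ≤ 1 := by
    intro i
    have hbv : Λ *ᵥ ⇑(hH.eigenvectorBasis i) = ev i • ⇑(hH.eigenvectorBasis i) :=
      hH.mulVec_eigenvectorBasis i
    have hnorm : (inner ℂ (hH.eigenvectorBasis i) (hH.eigenvectorBasis i) : ℂ) = 1 := by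
      rw [inner_self_eq_norm_sq_to_K, hH.eigenvectorBasis.orthonormal.1 i]
      simp
    have hdot : dotProduct (star ⇑(hH.eigenvectorBasis i)) ⇑(hH.eigenvectorBasis i)
        = 1 := by
      rw [dotProduct_comm]
      exact hnorm
    have hpos := hΛI.dotProduct_mulVec_nonneg ⇑(hH.eigenvectorBasis i)
    rw [Matrix.sub_mulVec, Matrix.one_mulVec, hbv, dotProduct_sub,
      dotProduct_smul, hdot] at hpos
    have h2 : (0:ℂ) ≤ 1 - (ev i : ℂ) := by
      convert hpos using 2
      simp [Complex.real_smul]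
    rw [Complex.le_def] at h2
    simp only [Complex.zero_re, Complex.sub_re, Complex.one_re, Complex.ofReal_re] at h2
    linarith [h2.1]
  classical
  have hmul : ∀ f g : n → ℂ, (U * Matrix.diagonal f * star U) * (U * Matrix.diagonal g * star U)
      = U * Matrix.diagonal (f * g) * star U := by
    intro f g
    have h1 : (U * Matrix.diagonal f * star U) * (U * Matrix.diagonal g * star U)
        = U * Matrix.diagonal f * (star U * U) * (Matrix.diagonal g * star U) := by noncomm_ring
    rw [h1, hUU, mul_one]
    have h2 : U * Matrix.diagonal f * (Matrix.diagonal g * star U)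
        = U * (Matrix.diagonal f * Matrix.diagonal g) * star U := by noncomm_ring
    rw [h2, Matrix.diagonal_mul_diagonal]
    rfl
  have hspec : Λ = U * Matrix.diagonal (fun i => (ev i : ℂ)) * star U := by
    have := hH.spectral_theorem
    simp only [Unitary.conjStarAlgAut_apply] at this
    exact this
  set g : n → ℂ := fun i => ((Real.sqrt (ev i * (1 - ev i)) : ℝ) : ℂ) with hg
  refine ⟨U * Matrix.diagonal g * star U, ?_, ?_, ?_⟩
  · rw [Matrix.star_eq_conjTranspose]
    simp only [Matrix.conjTranspose_mul, Matrix.conjTranspose_conjTranspose,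
      Matrix.diagonal_conjTranspose]
    have : star g = g := by
      funext i; simp [hg, Pi.star_apply, Complex.conj_ofReal]
    rw [this, mul_assoc]
  · rw [hmul, hspec, hmul]
    have h4 : ∀ A B : Matrix n n ℂ, U * A * star U - U * B * star U = U * (A - B) * star U := by
      intro A B; noncomm_ring
    rw [h4, Matrix.diagonal_sub]
    have hfun : (g * g) = (fun i => ((ev i : ℂ)) - (ev i : ℂ) * (ev i : ℂ)) := by
      funext i
      have hnn : 0 ≤ ev i * (1 - ev i) := mul_nonneg (hev0 i) (by linarith [hev1 i])
      simp only [hg, Pi.mul_apply]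
      rw [← Complex.ofReal_mul, Real.mul_self_sqrt hnn]
      push_cast
      ring
    rw [hfun]
    rfl
  · rw [hspec, hmul, hmul]
    have hfun : (g * fun i => (ev i : ℂ)) = ((fun i => (ev i : ℂ)) * g) := by
      funext i; simp [Pi.mul_apply, mul_comm]
    rw [hfun]

end Aux

open scoped MatrixOrder in
lemma psd_sqrt_exists {n : Type*} [Fintype n] [DecidableEq n] {A : Matrix n n ℂ}
    (hA : A.PosSemidef) : ∃ S : Matrix n n ℂ, Sᴴ = S ∧ S * S = A :=
  ⟨CFC.sqrt A, (CFC.sqrt_nonneg A).posSemidef.1, CFC.sqrt_mul_sqrt_self A hA.nonneg⟩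

def sEquiv (d : ℕ) : (Fin d ⊕ Fin d) ≃ (Fin d × Fin 2) where
  toFun := Sum.elim (fun i => (i, 0)) (fun i => (i, 1))
  invFun := fun p => if p.2 = 0 then Sum.inl p.1 else Sum.inr p.1
  left_inv := by rintro (i | i) <;> simp
  right_inv := by rintro ⟨i, c⟩; fin_cases c <;> simp

def eOne (M : ℕ) (m : Fin M) : (Fin M → Fin 2) ≃ Fin 2 × ({k : Fin M // k ≠ m} → Fin 2) :=
  Equiv.piSplitAt m _

def eBig (d M : ℕ) (m : Fin M) :
    Fin d × (Fin M → Fin 2) ≃ (Fin d × Fin 2) × ({k : Fin M // k ≠ m} → Fin 2) :=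
  ((Equiv.refl (Fin d)).prodCongr (eOne M m)).trans (Equiv.prodAssoc _ _ _).symm

lemma eOne_zero (M : ℕ) (m : Fin M) :
    eOne M m (fun _ => 0) = (0, fun _ => 0) := rfl

lemma eOne_eq_zero_iff (M : ℕ) (m : Fin M) (s : Fin M → Fin 2) :
    eOne M m s = (0, fun _ => 0) ↔ s = fun _ => 0 := by
  rw [← eOne_zero M m]
  exact (eOne M m).injective.eq_iff

lemma probeZero_eq (M : ℕ) (m : Fin M) :
    probeZero M = ((Matrix.single 0 0 (1:ℂ)) ⊗ₖ
        (Matrix.single (fun _ => 0) (fun _ => 0) (1:ℂ))).submatrix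
        ⇑(eOne M m) ⇑(eOne M m) := by
  ext s t
  simp only [probeZero, Matrix.submatrix_apply, Matrix.kroneckerMap_apply,
    Matrix.single, Matrix.of_apply]
  by_cases hs : s = fun _ => 0 <;> by_cases ht : t = fun _ => 0
  · subst hs; subst ht; simp [eOne_zero]
  · have : ¬((fun _ => (0:Fin 2)) = t) := fun h => ht h.symm
    simp only [this, and_false, if_false]
    have h2 : ¬(eOne M m t = (0, fun _ => 0)) := by rw [eOne_eq_zero_iff]; exact ht
    by_cases h : (0:Fin 2) = (eOne M m t).1
    · have h' : ¬((fun _ => (0:Fin 2)) = (eOne M m t).2) :=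
        fun hh => h2 (Prod.ext h.symm hh.symm)
      simp [h']
    · simp [h]
  · have : ¬((fun _ => (0:Fin 2)) = s) := fun h => hs h.symm
    simp only [this, false_and, if_false]
    have h2 : ¬(eOne M m s = (0, fun _ => 0)) := by rw [eOne_eq_zero_iff]; exact hs
    by_cases h : (0:Fin 2) = (eOne M m s).1
    · have h' : ¬((fun _ => (0:Fin 2)) = (eOne M m s).2) :=
        fun hh => h2 (Prod.ext h.symm hh.symm)
      simp [h']
    · simp [h]
  · have : ¬((fun _ => (0:Fin 2)) = s) := fun h => hs h.symm
    simp only [this, false_and, if_false]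
    have h2 : ¬(eOne M m s = (0, fun _ => 0)) := by rw [eOne_eq_zero_iff]; exact hs
    by_cases h : (0:Fin 2) = (eOne M m s).1
    · have h' : ¬((fun _ => (0:Fin 2)) = (eOne M m s).2) :=
        fun hh => h2 (Prod.ext h.symm hh.symm)
      simp [h']
    · simp [h]

lemma kron3 (d M : ℕ) (m : Fin M) (A : Matrix (Fin d) (Fin d) ℂ)
    (B : Matrix (Fin 2) (Fin 2) ℂ)
    (R : Matrix ({k : Fin M // k ≠ m} → Fin 2) ({k : Fin M // k ≠ m} → Fin 2) ℂ) :
    A ⊗ₖ ((B ⊗ₖ R).submatrix ⇑(eOne M m) ⇑(eOne M m))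
      = ((A ⊗ₖ B) ⊗ₖ R).submatrix ⇑(eBig d M m) ⇑(eBig d M m) := by
  ext ⟨i, s⟩ ⟨j, t⟩
  simp [eBig, Equiv.prodAssoc, Matrix.kroneckerMap_apply, Matrix.submatrix_apply, mul_assoc]

lemma kron_E00 (d : ℕ) (τ : Matrix (Fin d) (Fin d) ℂ) :
    τ ⊗ₖ (Matrix.single 0 0 (1:ℂ))
      = (Matrix.fromBlocks τ 0 0 0).submatrix ⇑(sEquiv d).symm ⇑(sEquiv d).symm := by
  ext ⟨i, c⟩ ⟨j, c'⟩
  fin_cases c <;> fin_cases c' <;>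
    simp [sEquiv, Matrix.kroneckerMap_apply, Matrix.single, Matrix.fromBlocks]

lemma trace_fromBlocks' {n o : Type*} [Fintype n] [Fintype o]
    (A : Matrix n n ℂ) (B : Matrix n o ℂ) (C : Matrix o n ℂ) (D : Matrix o o ℂ) :
    (Matrix.fromBlocks A B C D).trace = A.trace + D.trace := by
  simp [Matrix.trace, Matrix.fromBlocks, Fintype.sum_sum_type, Matrix.diag]

lemma trace_stdBasis_fun (M : ℕ) (m : Fin M) :
    (Matrix.single (fun _ => (0:Fin 2)) (fun _ => 0) (1:ℂ) :
      Matrix ({k : Fin M // k ≠ m} → Fin 2) _ ℂ).trace = 1 := by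
  simp [Matrix.trace, Matrix.single, Matrix.diag]

lemma trace_probeZero (M : ℕ) : (probeZero M).trace = 1 := by
  simp [Matrix.trace, probeZero, Matrix.single, Matrix.diag]

lemma probeZero_herm (M : ℕ) : (probeZero M)ᴴ = probeZero M := by
  ext s t
  simp only [probeZero, Matrix.conjTranspose_apply, Matrix.single, Matrix.of_apply]
  by_cases hs : (fun _ => (0 : Fin 2)) = s <;> by_cases ht : (fun _ => (0 : Fin 2)) = t <;>
    simp [hs, ht]

lemma probeZero_mul_self (M : ℕ) : probeZero M * probeZero M = probeZero M := by
  rw [probeZero]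
  rw [Matrix.single_mul_single_same]
  norm_num
/-- **Non-commutative union bound for general measurements (POVMs).**
For a subnormalized state `σ` and operators `0 ≤ Λ_m ≤ I`, there are orthogonal projections
`Π_m` on the extended space `ℂ^d ⊗ (ℂ²)^{⊗M}` that are Naimark extensions of the `Λ_m`
(i.e. `Tr (Π_m (τ ⊗ |0̄⟩⟨0̄|)) = Tr (Λ_m τ)` for all `τ`) and satisfy
`Tr σ − Tr (Π_M ⋯ Π₁ (σ ⊗ |0̄⟩⟨0̄|) Π₁ ⋯ Π_M) ≤ 2 √(∑ₘ Tr ((I − Λ_m) σ))`. -/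
theorem noncommutative_union_bound_povm {d M : ℕ}
    (σ : Matrix (Fin d) (Fin d) ℂ) (hσ : σ.PosSemidef) (hσtr : σ.trace.re ≤ 1)
    (Λ : Fin M → Matrix (Fin d) (Fin d) ℂ)
    (hΛ : ∀ m, (Λ m).PosSemidef)
    (hΛI : ∀ m, ((1 : Matrix (Fin d) (Fin d) ℂ) - Λ m).PosSemidef) :
    ∃ P : Fin M → Matrix (Fin d × (Fin M → Fin 2)) (Fin d × (Fin M → Fin 2)) ℂ,
      (∀ m, (P m).IsHermitian) ∧ (∀ m, P m * P m = P m) ∧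
      (∀ m (τ : Matrix (Fin d) (Fin d) ℂ),
        (P m * (τ ⊗ₖ probeZero M)).trace = (Λ m * τ).trace) ∧
      σ.trace.re -
          ((List.ofFn P).reverse.prod * (σ ⊗ₖ probeZero M) * (List.ofFn P).prod).trace.re
        ≤ 2 * Real.sqrt (∑ m, (((1 : Matrix (Fin d) (Fin d) ℂ) - Λ m) * σ).trace.re) := by
  classical
  choose C hCherm hCC hCΛ using fun m => exists_offdiag (Λ m) (hΛ m) (hΛI m)
  set F : Fin M → Matrix (Fin d ⊕ Fin d) (Fin d ⊕ Fin d) ℂ :=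
    fun m => Matrix.fromBlocks (Λ m) (C m) (C m) ((1 : Matrix (Fin d) (Fin d) ℂ) - Λ m) with hF
  have hFherm : ∀ m, (F m)ᴴ = F m := by
    intro m
    rw [hF]
    rw [Matrix.fromBlocks_conjTranspose, (hΛ m).1, hCherm,
      Matrix.conjTranspose_sub, Matrix.conjTranspose_one, (hΛ m).1]
  have hFF : ∀ m, F m * F m = F m := by
    intro m
    rw [hF]
    rw [Matrix.fromBlocks_multiply]
    have hA : Λ m * Λ m + C m * C m = Λ m := by rw [hCC]; abel
    have hB : Λ m * C m + C m * ((1 : Matrix (Fin d) (Fin d) ℂ) - Λ m) = C m := by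
      rw [Matrix.mul_sub, Matrix.mul_one, hCΛ]; abel
    have hC' : C m * Λ m + ((1 : Matrix (Fin d) (Fin d) ℂ) - Λ m) * C m = C m := by
      rw [Matrix.sub_mul, Matrix.one_mul, hCΛ]; abel
    have hD : C m * C m + ((1 : Matrix (Fin d) (Fin d) ℂ) - Λ m) *
        ((1 : Matrix (Fin d) (Fin d) ℂ) - Λ m) = (1 : Matrix (Fin d) (Fin d) ℂ) - Λ m := by
      rw [hCC, Matrix.sub_mul, Matrix.one_mul, Matrix.mul_sub, Matrix.mul_one]; abel
    rw [hA, hB, hC', hD]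
  set Q : Fin M → Matrix (Fin d × Fin 2) (Fin d × Fin 2) ℂ :=
    fun m => (F m).submatrix ⇑(sEquiv d).symm ⇑(sEquiv d).symm with hQ
  set P : Fin M → Matrix (Fin d × (Fin M → Fin 2)) (Fin d × (Fin M → Fin 2)) ℂ :=
    fun m => ((Q m) ⊗ₖ (1 : Matrix ({k : Fin M // k ≠ m} → Fin 2) _ ℂ)).submatrix
      ⇑(eBig d M m) ⇑(eBig d M m) with hP
  have hQherm : ∀ m, (Q m)ᴴ = Q m := by
    intro m
    rw [hQ, Matrix.conjTranspose_submatrix, hFherm]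
  have hQQ : ∀ m, Q m * Q m = Q m := by
    intro m
    rw [hQ]
    rw [Matrix.submatrix_mul_equiv (F m) (F m) _ (sEquiv d).symm _, hFF]
  have hPherm : ∀ m, (P m)ᴴ = P m := by
    intro m
    rw [hP, Matrix.conjTranspose_submatrix, kron_conjTranspose, hQherm,
      Matrix.conjTranspose_one]
  have hPP : ∀ m, P m * P m = P m := by
    intro m
    rw [hP]
    rw [Matrix.submatrix_mul_equiv _ _ _ (eBig d M m) _, ← Matrix.mul_kronecker_mul,
      hQQ, Matrix.one_mul]
  have hNaimark : ∀ m (τ : Matrix (Fin d) (Fin d) ℂ),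
      (P m * (τ ⊗ₖ probeZero M)).trace = (Λ m * τ).trace := by
    intro m τ
    have h1 : τ ⊗ₖ probeZero M
        = ((τ ⊗ₖ Matrix.single 0 0 (1:ℂ)) ⊗ₖ
            Matrix.single (fun _ => 0) (fun _ => 0) (1:ℂ)).submatrix
            ⇑(eBig d M m) ⇑(eBig d M m) := by
      rw [probeZero_eq M m, kron3]
    rw [h1, hP]
    rw [Matrix.submatrix_mul_equiv _ _ _ (eBig d M m) _, ← Matrix.mul_kronecker_mul,
      Matrix.one_mul, trace_submatrix_equiv', Matrix.trace_kronecker, trace_stdBasis_fun,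
      mul_one, kron_E00, hQ,
      Matrix.submatrix_mul_equiv _ _ _ (sEquiv d).symm _, trace_submatrix_equiv',
      hF, Matrix.fromBlocks_multiply]
    simp only [Matrix.mul_zero, Matrix.zero_mul, add_zero, zero_add, Matrix.mul_one]
    rw [trace_fromBlocks']
    simp
  refine ⟨P, fun m => hPherm m, hPP, hNaimark, ?_⟩
  set L : List (Matrix (Fin d × (Fin M → Fin 2)) (Fin d × (Fin M → Fin 2)) ℂ)
    := List.ofFn P with hL
  set B : Matrix (Fin d × (Fin M → Fin 2)) (Fin d × (Fin M → Fin 2)) ℂ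
    := L.reverse.prod with hB
  set ρ : Matrix (Fin d × (Fin M → Fin 2)) (Fin d × (Fin M → Fin 2)) ℂ
    := σ ⊗ₖ probeZero M with hρ
  obtain ⟨Sσ, hSherm, hSS⟩ := psd_sqrt_exists hσ
  set W : Matrix (Fin d × (Fin M → Fin 2)) (Fin d × (Fin M → Fin 2)) ℂ
    := Sσ ⊗ₖ probeZero M with hW
  have hWherm : Wᴴ = W := by
    rw [hW, kron_conjTranspose, probeZero_herm, hSherm]
  have hWW : W * W = ρ := by
    rw [hW, hρ, ← Matrix.mul_kronecker_mul, hSS, probeZero_mul_self]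
  have hmemL : ∀ p ∈ L, pᴴ = p ∧ p * p = p := by
    intro p hp
    rw [hL, List.mem_ofFn] at hp
    obtain ⟨m, rfl⟩ := hp
    exact ⟨hPherm m, hPP m⟩
  have hmemLrev : ∀ p ∈ L.reverse, pᴴ = p ∧ p * p = p :=
    fun p hp => hmemL p (List.mem_reverse.mp hp)
  have hBH : Bᴴ = L.prod := reverse_prod_conjTranspose L (fun p hp => (hmemL p hp).1)
  set ψ : (Fin d × (Fin M → Fin 2)) → (Fin d × (Fin M → Fin 2)) → ℂ :=
    fun j => fun i => W i j with hψ
  have htrρ : ρ.trace = σ.trace := by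
    rw [hρ, Matrix.trace_kronecker, trace_probeZero, mul_one]
  have hsum_a : σ.trace.re = ∑ j, ‖toE (ψ j)‖ ^ 2 := by
    have h : σ.trace = (Wᴴ * W).trace := by rw [hWherm, hWW, htrρ]
    rw [h, trace_conjTranspose_mul_self_re]
  have hmain : (B * ρ * L.prod).trace.re = ∑ j, ‖toE (B *ᵥ ψ j)‖ ^ 2 := by
    have e1 : B * ρ * L.prod = (B * W) * (B * W)ᴴ := by
      rw [← hBH, ← hWW, Matrix.conjTranspose_mul, hWherm]
      noncomm_ring
    rw [e1, Matrix.trace_mul_comm, trace_conjTranspose_mul_self_re]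
    exact Finset.sum_congr rfl fun j _ => by rw [col_mul]
  have h1mP : ∀ m, ((1 : Matrix (Fin d × (Fin M → Fin 2)) (Fin d × (Fin M → Fin 2)) ℂ) - P m) *
      ((1 : Matrix (Fin d × (Fin M → Fin 2)) (Fin d × (Fin M → Fin 2)) ℂ) - P m)
      = (1 : Matrix (Fin d × (Fin M → Fin 2)) (Fin d × (Fin M → Fin 2)) ℂ) - P m := by
    intro m
    calc ((1 : Matrix (Fin d × (Fin M → Fin 2)) (Fin d × (Fin M → Fin 2)) ℂ) - P m) *
        ((1 : Matrix (Fin d × (Fin M → Fin 2)) (Fin d × (Fin M → Fin 2)) ℂ) - P m)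
        = 1 - P m - P m + P m * P m := by noncomm_ring
      _ = _ := by rw [hPP m]; abel
  have herr : ∀ m, (((1 : Matrix (Fin d) (Fin d) ℂ) - Λ m) * σ).trace.re
      = ∑ j, ‖toE ((((1 : Matrix (Fin d × (Fin M → Fin 2)) (Fin d × (Fin M → Fin 2)) ℂ))
        - P m) *ᵥ ψ j)‖ ^ 2 := by
    intro m
    have h1 : (((1 : Matrix (Fin d) (Fin d) ℂ) - Λ m) * σ).trace
        = (((1 : Matrix (Fin d × (Fin M → Fin 2)) (Fin d × (Fin M → Fin 2)) ℂ) - P m)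
            * ρ).trace := by
      rw [Matrix.sub_mul, Matrix.sub_mul, Matrix.one_mul, Matrix.one_mul,
        Matrix.trace_sub, Matrix.trace_sub, htrρ, hρ, hNaimark m σ]
    have e : ((((1 : Matrix (Fin d × (Fin M → Fin 2)) (Fin d × (Fin M → Fin 2)) ℂ) - P m)
          * W)ᴴ) * ((((1 : Matrix (Fin d × (Fin M → Fin 2)) (Fin d × (Fin M → Fin 2)) ℂ)
          - P m)) * W)
        = W * ((1 : Matrix (Fin d × (Fin M → Fin 2)) (Fin d × (Fin M → Fin 2)) ℂ) - P m)
          * W := by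
      rw [Matrix.conjTranspose_mul, hWherm, Matrix.conjTranspose_sub,
        Matrix.conjTranspose_one, hPherm m]
      calc W * (1 - P m) * ((1 - P m) * W)
          = W * ((1 - P m) * (1 - P m)) * W := by noncomm_ring
        _ = W * (1 - P m) * W := by rw [h1mP m]
    have h2 : (((1 : Matrix (Fin d × (Fin M → Fin 2)) (Fin d × (Fin M → Fin 2)) ℂ) - P m)
          * ρ).trace
        = (((((1 : Matrix (Fin d × (Fin M → Fin 2)) (Fin d × (Fin M → Fin 2)) ℂ) - P m)
            * W)ᴴ) * ((((1 : Matrix (Fin d × (Fin M → Fin 2)) (Fin d × (Fin M → Fin 2)) ℂ)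
            - P m)) * W)).trace := by
      rw [e, Matrix.trace_mul_cycle, ← hWW, Matrix.trace_mul_comm]
      try rw [mul_assoc]
    have h3 := congrArg Complex.re (h1.trans h2)
    rw [h3, trace_conjTranspose_mul_self_re]
    exact Finset.sum_congr rfl fun j _ => by rw [col_mul]
  set S : ℝ := ∑ m, (((1 : Matrix (Fin d) (Fin d) ℂ) - Λ m) * σ).trace.re with hS
  have hsen : ∀ j, ‖toE (((1 : Matrix (Fin d × (Fin M → Fin 2))
        (Fin d × (Fin M → Fin 2)) ℂ) - B) *ᵥ ψ j)‖ ^ 2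
      ≤ ∑ m, ‖toE ((((1 : Matrix (Fin d × (Fin M → Fin 2)) (Fin d × (Fin M → Fin 2)) ℂ))
          - P m) *ᵥ ψ j)‖ ^ 2 := by
    intro j
    refine le_trans (sen_key L.reverse hmemLrev (ψ j)) (le_of_eq ?_)
    rw [List.map_reverse, List.sum_reverse, hL, List.map_ofFn, List.sum_ofFn]
    rfl
  have hsum_b : ∑ j, ‖toE (((1 : Matrix (Fin d × (Fin M → Fin 2))
        (Fin d × (Fin M → Fin 2)) ℂ) - B) *ᵥ ψ j)‖ ^ 2 ≤ S := by
    calc ∑ j, ‖toE (((1 : Matrix (Fin d × (Fin M → Fin 2))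
            (Fin d × (Fin M → Fin 2)) ℂ) - B) *ᵥ ψ j)‖ ^ 2
        ≤ ∑ j, ∑ m, ‖toE ((((1 : Matrix (Fin d × (Fin M → Fin 2))
            (Fin d × (Fin M → Fin 2)) ℂ)) - P m) *ᵥ ψ j)‖ ^ 2 :=
          Finset.sum_le_sum fun j _ => hsen j
      _ = ∑ m, ∑ j, ‖toE ((((1 : Matrix (Fin d × (Fin M → Fin 2))
            (Fin d × (Fin M → Fin 2)) ℂ)) - P m) *ᵥ ψ j)‖ ^ 2 := Finset.sum_comm
      _ = S := by
          rw [hS]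
          exact Finset.sum_congr rfl fun m _ => (herr m).symm
  have hperj : ∀ j, ‖toE (ψ j)‖ ^ 2 - ‖toE (B *ᵥ ψ j)‖ ^ 2
      ≤ 2 * (‖toE (ψ j)‖ * ‖toE (((1 : Matrix (Fin d × (Fin M → Fin 2))
          (Fin d × (Fin M → Fin 2)) ℂ) - B) *ᵥ ψ j)‖) := by
    intro j
    have hc : ‖toE (B *ᵥ ψ j)‖ ≤ ‖toE (ψ j)‖ := prod_contract L.reverse hmemLrev (ψ j)
    have hdec : ψ j = B *ᵥ ψ j + ((1 : Matrix (Fin d × (Fin M → Fin 2))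
        (Fin d × (Fin M → Fin 2)) ℂ) - B) *ᵥ ψ j := by
      rw [Matrix.sub_mulVec, Matrix.one_mulVec]; abel
    have ht : ‖toE (ψ j)‖ ≤ ‖toE (B *ᵥ ψ j)‖ + ‖toE (((1 : Matrix (Fin d × (Fin M → Fin 2))
        (Fin d × (Fin M → Fin 2)) ℂ) - B) *ᵥ ψ j)‖ := by
      calc ‖toE (ψ j)‖ = ‖toE (B *ᵥ ψ j) + toE (((1 : Matrix (Fin d × (Fin M → Fin 2))
            (Fin d × (Fin M → Fin 2)) ℂ) - B) *ᵥ ψ j)‖ := by rw [← toE_add, ← hdec]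
        _ ≤ _ := norm_add_le _ _
    nlinarith [norm_nonneg (toE (ψ j)), norm_nonneg (toE (B *ᵥ ψ j)),
      norm_nonneg (toE (((1 : Matrix (Fin d × (Fin M → Fin 2))
        (Fin d × (Fin M → Fin 2)) ℂ) - B) *ᵥ ψ j))]
  rw [hsum_a, hmain]
  have hCS := Real.sum_mul_le_sqrt_mul_sqrt Finset.univ (fun j => ‖toE (ψ j)‖)
    (fun j => ‖toE (((1 : Matrix (Fin d × (Fin M → Fin 2))
      (Fin d × (Fin M → Fin 2)) ℂ) - B) *ᵥ ψ j)‖)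
  have hs1 : Real.sqrt (∑ j, ‖toE (ψ j)‖ ^ 2) ≤ 1 :=
    Real.sqrt_le_one.mpr (by rw [← hsum_a]; exact hσtr)
  have hs2 : Real.sqrt (∑ j, ‖toE (((1 : Matrix (Fin d × (Fin M → Fin 2))
      (Fin d × (Fin M → Fin 2)) ℂ) - B) *ᵥ ψ j)‖ ^ 2) ≤ Real.sqrt S :=
    Real.sqrt_le_sqrt hsum_b
  have hmm : Real.sqrt (∑ j, ‖toE (ψ j)‖ ^ 2) * Real.sqrt (∑ j, ‖toE ((
      (1 : Matrix (Fin d × (Fin M → Fin 2)) (Fin d × (Fin M → Fin 2)) ℂ) - B) *ᵥ ψ j)‖ ^ 2)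
      ≤ 1 * Real.sqrt S :=
    mul_le_mul hs1 hs2 (Real.sqrt_nonneg _) zero_le_one
  have hsplit : ∑ j, ‖toE (ψ j)‖ ^ 2 - ∑ j, ‖toE (B *ᵥ ψ j)‖ ^ 2
      ≤ ∑ j, 2 * (‖toE (ψ j)‖ * ‖toE (((1 : Matrix (Fin d × (Fin M → Fin 2))
        (Fin d × (Fin M → Fin 2)) ℂ) - B) *ᵥ ψ j)‖) := by
    rw [← Finset.sum_sub_distrib]
    exact Finset.sum_le_sum fun j _ => hperj j
  have hfin : ∑ j, 2 * (‖toE (ψ j)‖ * ‖toE (((1 : Matrix (Fin d × (Fin M → Fin 2))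
      (Fin d × (Fin M → Fin 2)) ℂ) - B) *ᵥ ψ j)‖) ≤ 2 * Real.sqrt S := by
    rw [← Finset.mul_sum]
    nlinarith [hCS, hmm]
  linarith
end

section
/- (Naimark extension theorem) Let X be a finite nonempty index set with a distinguished element 0, and let {Γ_x}_{x∈X} be a POVM on ℂ^d, i.e., each Γ_x is positive semidefinite and Σ_{x∈X} Γ_x = I. Then there exists a unitary matrix U on ℂ^d ⊗ ℂ^X such that for every x ∈ X and every d×d complex matrix ρ, Tr{ U† (I_d ⊗ |x⟩⟨x|) U (ρ ⊗ |0⟩⟨0|) } = Tr{Γ_x ρ}, where {|x⟩}_{x∈X} is the standard orthonormal basis of ℂ^X. -/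
open Matrix Kronecker ComplexOrder

noncomputable def isoOfIsometryMatrix {m n : Type} [Fintype m] [Fintype n] [DecidableEq n]
    (A : Matrix m n ℂ) (hA : Aᴴ * A = 1) :
    EuclideanSpace ℂ n →ₗᵢ[ℂ] EuclideanSpace ℂ m :=
  (Matrix.toEuclideanLin A).isometryOfInner (by
    intro x y
    rw [EuclideanSpace.inner_eq_star_dotProduct, EuclideanSpace.inner_eq_star_dotProduct,
      dotProduct_comm, dotProduct_comm (WithLp.ofLp y)]
    show dotProduct (star (A *ᵥ (WithLp.equiv _ _ x))) (A *ᵥ (WithLp.equiv _ _ y))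
      = dotProduct (star (WithLp.equiv _ _ x)) (WithLp.equiv _ _ y)
    rw [Matrix.star_mulVec, dotProduct_mulVec, Matrix.vecMul_vecMul, hA,
      Matrix.vecMul_one])

theorem isoOfIsometryMatrix_apply {m n : Type} [Fintype m] [Fintype n] [DecidableEq n]
    (A : Matrix m n ℂ) (hA : Aᴴ * A = 1) (v : EuclideanSpace ℂ n) (i : m) :
    isoOfIsometryMatrix A hA v i = (A *ᵥ (fun j => v j)) i := rfl


theorem extend_isometry_exists {E F : Type*} [NormedAddCommGroup E] [InnerProductSpace ℂ E]
    [NormedAddCommGroup F] [InnerProductSpace ℂ F] [FiniteDimensional ℂ E]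
    [FiniteDimensional ℂ F]
    (W ι : E →ₗᵢ[ℂ] F) :
    ∃ Uiso : F →ₗᵢ[ℂ] F, ∀ f, Uiso (ι f) = W f := by
  classical
  let e := LinearEquiv.ofInjective ι.toLinearMap ι.injective
  have hcoe : ∀ f : E, ((e f : LinearMap.range ι.toLinearMap) : F) = ι f := fun f =>
    LinearEquiv.ofInjective_apply _ _
  let L : (LinearMap.range ι.toLinearMap) →ₗᵢ[ℂ] F :=
    (W.toLinearMap ∘ₗ (e.symm.toLinearMap)).isometryOfInner (by
      intro u v
      have hu : (u : F) = ι (e.symm u) := by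
        conv_lhs => rw [← e.apply_symm_apply u]
        rw [hcoe]
      have hv : (v : F) = ι (e.symm v) := by
        conv_lhs => rw [← e.apply_symm_apply v]
        rw [hcoe]
      calc (inner ℂ ((W.toLinearMap ∘ₗ e.symm.toLinearMap) u)
              ((W.toLinearMap ∘ₗ e.symm.toLinearMap) v) : ℂ)
          = (inner ℂ (W (e.symm u)) (W (e.symm v)) : ℂ) := rfl
        _ = (inner ℂ (e.symm u : E) (e.symm v) : ℂ) := W.inner_map_map _ _
        _ = (inner ℂ (ι (e.symm u)) (ι (e.symm v)) : ℂ) := (ι.inner_map_map _ _).symm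
        _ = (inner ℂ (u : F) (v : F) : ℂ) := by rw [← hu, ← hv]
        _ = (inner ℂ u v : ℂ) := rfl)
  refine ⟨L.extend, fun f => ?_⟩
  have h1 : ι f = ((e f : LinearMap.range ι.toLinearMap) : F) := (hcoe f).symm
  rw [h1, L.extend_apply (e f)]
  show W (e.symm (e f)) = W f
  rw [e.symm_apply_apply]

theorem exists_unitary_matrix_mul_eq {m n : Type} [Fintype m] [Fintype n]
    [DecidableEq m] [DecidableEq n]
    (A C : Matrix m n ℂ) (hA : Aᴴ * A = 1) (hC : Cᴴ * C = 1) :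
    ∃ U : Matrix m m ℂ, Uᴴ * U = 1 ∧ U * Uᴴ = 1 ∧ U * C = A := by
  classical
  obtain ⟨Uiso, hext⟩ := extend_isometry_exists (isoOfIsometryMatrix A hA)
    (isoOfIsometryMatrix C hC)
  let U := Matrix.toEuclideanLin.symm Uiso.toLinearMap
  have hUlin : Matrix.toEuclideanLin U = Uiso.toLinearMap := LinearEquiv.apply_symm_apply _ _
  have hUv : ∀ v : EuclideanSpace ℂ m, Uiso v = U *ᵥ (fun i => v i) := by
    intro v
    show (Uiso.toLinearMap v).ofLp = _
    rw [← hUlin]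
    rfl
  have hcol : ∀ q : m, Uiso (EuclideanSpace.single q 1) = fun p => U p q := by
    intro q
    rw [hUv]
    funext p
    simp [Matrix.mulVec, dotProduct, EuclideanSpace.single_apply]
  have hUU : Uᴴ * U = 1 := by
    ext q q'
    have h := Uiso.inner_map_map (EuclideanSpace.single q (1 : ℂ))
      (EuclideanSpace.single q' (1 : ℂ))
    rw [EuclideanSpace.inner_single_left, EuclideanSpace.single_apply] at h
    calc (Uᴴ * U) q q' = ∑ p, star (U p q) * U p q' := by
          simp [Matrix.mul_apply, Matrix.conjTranspose_apply]
      _ = (inner ℂ (Uiso (EuclideanSpace.single q (1 : ℂ)))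
            (Uiso (EuclideanSpace.single q' (1 : ℂ))) : ℂ) := by
          rw [PiLp.inner_apply]
          refine Finset.sum_congr rfl fun p _ => ?_
          rw [hcol q, hcol q']
          exact mul_comm _ _
      _ = star (1 : ℂ) * (if q = q' then 1 else 0) := h
      _ = (1 : Matrix m m ℂ) q q' := by simp [Matrix.one_apply]
  refine ⟨U, hUU, mul_eq_one_comm.mp hUU, ?_⟩
  ext p j
  have hmv : ∀ (M : Matrix m n ℂ),
      (M *ᵥ (fun i => EuclideanSpace.single j (1 : ℂ) i)) p = M p j := by
    intro M
    simp [Matrix.mulVec, dotProduct, EuclideanSpace.single_apply]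
  calc (U * C) p j
      = ((U * C) *ᵥ (fun i => EuclideanSpace.single j (1 : ℂ) i)) p := (hmv _).symm
    _ = Uiso (isoOfIsometryMatrix C hC (EuclideanSpace.single j 1)) p := by
        rw [← Matrix.mulVec_mulVec, hUv (isoOfIsometryMatrix C hC (EuclideanSpace.single j 1))]
        rfl
    _ = isoOfIsometryMatrix A hA (EuclideanSpace.single j 1) p := by rw [hext]
    _ = A p j := hmv _

/-- **Naimark extension theorem.**
For any POVM `{Γ_x}_{x ∈ X}` on `ℂ^d` (positive semidefinite matrices summing to the
identity), there is a unitary `U` on `ℂ^d ⊗ ℂ^X` such that measuring the probe in the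
standard basis after applying `U` to `ρ ⊗ |0⟩⟨0|` reproduces the POVM statistics:
`Tr (U† (I ⊗ |x⟩⟨x|) U (ρ ⊗ |0⟩⟨0|)) = Tr (Γ_x ρ)`. -/
theorem naimark_extension {d : ℕ} {X : Type} [Fintype X] [DecidableEq X] [Nonempty X]
    (x₀ : X) (Γ : X → Matrix (Fin d) (Fin d) ℂ)
    (hΓ : ∀ x, (Γ x).PosSemidef) (hΓsum : ∑ x, Γ x = 1) :
    ∃ U : Matrix (Fin d × X) (Fin d × X) ℂ,
      Uᴴ * U = 1 ∧ U * Uᴴ = 1 ∧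
      ∀ (x : X) (ρ : Matrix (Fin d) (Fin d) ℂ),
        (Uᴴ * ((1 : Matrix (Fin d) (Fin d) ℂ) ⊗ₖ Matrix.single x x (1 : ℂ)) * U *
            (ρ ⊗ₖ Matrix.single x₀ x₀ (1 : ℂ))).trace
          = (Γ x * ρ).trace := by
  classical
  open scoped MatrixOrder in
  set B : X → Matrix (Fin d) (Fin d) ℂ := fun y => CFC.sqrt (Γ y) with hBdef
  have hBB : ∀ y, (B y)ᴴ * B y = Γ y := fun y => by
    open scoped MatrixOrder in
    rw [hBdef]
    open scoped MatrixOrder in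
    rw [(Matrix.nonneg_iff_posSemidef.mp (CFC.sqrt_nonneg (Γ y))).1]
    open scoped MatrixOrder in
    exact CFC.sqrt_mul_sqrt_self (Γ y) (Matrix.nonneg_iff_posSemidef.mpr (hΓ y))
  set Vm : Matrix (Fin d × X) (Fin d) ℂ := Matrix.of (fun p j => B p.2 p.1 j) with hVmdef
  have hV : Vmᴴ * Vm = 1 := by
    have h1 : Vmᴴ * Vm = ∑ y, (B y)ᴴ * B y := by
      ext j k
      rw [Matrix.mul_apply, Fintype.sum_prod_type, Finset.sum_comm, Matrix.sum_apply]
      refine Finset.sum_congr rfl fun y _ => ?_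
      rw [Matrix.mul_apply]
      rfl
    rw [h1]
    simp only [hBB]
    exact hΓsum
  set Jm : Matrix (Fin d × X) (Fin d) ℂ :=
    Matrix.of (fun p j => if p = (j, x₀) then 1 else 0) with hJmdef
  have hJ : Jmᴴ * Jm = 1 := by
    ext j k
    rw [Matrix.mul_apply]
    have h1 : ∀ p : Fin d × X, Jmᴴ j p * Jm p k
        = if p = (j, x₀) then (if j = k then 1 else 0) else 0 := by
      intro p
      simp only [Matrix.conjTranspose_apply, hJmdef, Matrix.of_apply]
      by_cases hp : p = (j, x₀)
      · subst hp
        by_cases hjk : j = k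
        · subst hjk; simp
        · simp [hjk, Prod.ext_iff]
      · simp [hp]
    simp_rw [h1]
    rw [Finset.sum_ite_eq' Finset.univ ((j, x₀) : Fin d × X)]
    simp [Matrix.one_apply]
  obtain ⟨U, hUU, hUU', hUC⟩ := exists_unitary_matrix_mul_eq Vm Jm hV hJ
  have hUcol : ∀ (p : Fin d × X) (j : Fin d), U p (j, x₀) = Vm p j := by
    intro p j
    have h := congrFun (congrFun hUC p) j
    rw [Matrix.mul_apply] at h
    rw [← h]
    simp [hJmdef]
  refine ⟨U, hUU, hUU', ?_⟩
  intro x ρ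
  have hKey : ∀ j k : Fin d, (∑ i, star (U (i, x) (j, x₀)) * U (i, x) (k, x₀)) = Γ x j k := by
    intro j k
    rw [← hBB x, Matrix.mul_apply]
    refine Finset.sum_congr rfl fun i _ => ?_
    rw [hUcol (i, x) j, hUcol (i, x) k]
    rfl
  have hM : Uᴴ * ((1 : Matrix (Fin d) (Fin d) ℂ) ⊗ₖ Matrix.single x x (1 : ℂ)) * U
      = Matrix.of (fun a b => ∑ i, star (U (i, x) a) * U (i, x) b) := by
    ext a b
    rw [Matrix.mul_apply]
    simp only [Matrix.mul_apply, Matrix.conjTranspose_apply, Matrix.kroneckerMap_apply,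
      Matrix.one_apply, Matrix.single, Matrix.of_apply, Fintype.sum_prod_type]
    simp [Finset.mul_sum, Finset.sum_mul, mul_ite, ite_mul, zero_mul, mul_zero, mul_one,
      ite_and, Finset.sum_ite_eq, Finset.sum_ite_eq', mul_comm, mul_assoc, mul_left_comm]
  have expand : ∀ A : Matrix (Fin d × X) (Fin d × X) ℂ,
      (A * (ρ ⊗ₖ Matrix.single x₀ x₀ (1 : ℂ))).trace
        = ∑ a1 : Fin d, ∑ b1 : Fin d, A (a1, x₀) (b1, x₀) * ρ b1 a1 := by
    intro A
    rw [Matrix.trace]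
    simp only [Matrix.diag_apply, Matrix.mul_apply, Matrix.kroneckerMap_apply,
      Matrix.single, Matrix.of_apply, Fintype.sum_prod_type]
    simp [mul_ite, ite_mul, zero_mul, mul_zero, mul_one, ite_and,
      Finset.sum_ite_eq, Finset.sum_ite_eq']
  rw [hM, expand, Matrix.trace]
  simp only [Matrix.diag_apply, Matrix.mul_apply, Matrix.of_apply]
  refine Finset.sum_congr rfl fun a1 _ => Finset.sum_congr rfl fun b1 _ => ?_
  rw [hKey a1 b1]
end

section
/- (Gentle Operator Lemma) Let ρ be a d×d positive semidefinite complex matrix with Tr ρ = 1 (a quantum state), and let Λ be a d×d complex matrix with 0 ≤ Λ ≤ I. Then ‖ρ − √Λ ρ √Λ‖₁ ≤ 2·√( Tr{(I − Λ) ρ} ), where ‖A‖₁ denotes the trace norm. In particular, if Tr{Λ ρ} ≥ 1 − ε for some ε ≥ 0, then ‖ρ − √Λ ρ √Λ‖₁ ≤ 2√ε. -/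
set_option linter.unusedSectionVars false
set_option linter.unusedTactic false
set_option linter.unnecessarySeqFocus false
set_option maxHeartbeats 1000000

open Matrix ComplexOrder

/-- The positive semidefinite square root, as defined in Mathlib (Dec 2024), where it has since been removed. -/
noncomputable def Matrix.PosSemidef.sqrt {n : Type*} [Fintype n] [DecidableEq n] {𝕜 : Type*} [RCLike 𝕜]
    {A : Matrix n n 𝕜} (hA : A.PosSemidef) : Matrix n n 𝕜 :=
  hA.1.eigenvectorUnitary.1 * diagonal ((↑) ∘ (√·) ∘ hA.1.eigenvalues) *
    (star hA.1.eigenvectorUnitary : Matrix n n 𝕜)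

section SqrtPort

open scoped MatrixOrder

variable {n : Type*} [Fintype n] [DecidableEq n]

lemma Matrix.PosSemidef.sqrt_eq_cfcSqrt {A : Matrix n n ℂ} (hA : A.PosSemidef) :
    hA.sqrt = CFC.sqrt A := by
  rw [CFC.sqrt_eq_cfc, cfc_nnreal_eq_real _ A, hA.1.cfc_eq]
  simp only [IsHermitian.cfc, Matrix.PosSemidef.sqrt]
  congr 2
  ext i j
  by_cases h : i = j <;> simp [Matrix.diagonal_apply, h, max_eq_left (hA.eigenvalues_nonneg _)]

lemma Matrix.PosSemidef.posSemidef_sqrt {A : Matrix n n ℂ} (hA : A.PosSemidef) :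
    hA.sqrt.PosSemidef := by
  rw [hA.sqrt_eq_cfcSqrt]; exact (CFC.sqrt_nonneg A).posSemidef

lemma Matrix.PosSemidef.sqrt_mul_self {A : Matrix n n ℂ} (hA : A.PosSemidef) :
    hA.sqrt * hA.sqrt = A := by
  rw [hA.sqrt_eq_cfcSqrt]; exact CFC.sqrt_mul_sqrt_self A hA.nonneg

lemma Matrix.PosSemidef.eq_sqrt_of_sq_eq {A : Matrix n n ℂ} (hA : A.PosSemidef)
    {B : Matrix n n ℂ} (hB : B.PosSemidef) (hAB : A ^ 2 = B) : A = hB.sqrt := by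
  rw [hB.sqrt_eq_cfcSqrt, eq_comm, CFC.sqrt_eq_iff _ _ hB.nonneg hA.nonneg, ← sq, hAB]

end SqrtPort

/-- The trace norm `‖A‖₁ = Tr √(A† A)` of a complex matrix. -/
noncomputable def traceNorm {n : Type*} [Fintype n] [DecidableEq n]
    (A : Matrix n n ℂ) : ℝ :=
  (Matrix.posSemidef_conjTranspose_mul_self A).sqrt.trace.re

section Helpers

variable {n : Type*} [Fintype n] [DecidableEq n]

lemma psd_trace_re_nonneg {A : Matrix n n ℂ} (hA : A.PosSemidef) : 0 ≤ A.trace.re := by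
  have : ∀ i, 0 ≤ (A i i).re := by
    intro i
    have h := hA.dotProduct_mulVec_nonneg (Pi.single i 1)
    have hd : (dotProduct (star (Pi.single i 1)) (A *ᵥ Pi.single i 1)) = A i i := by
      simp [Matrix.mulVec_single, dotProduct, Pi.single_apply, apply_ite]
    rw [hd] at h
    exact (Complex.le_def.mp h).1
  rw [Matrix.trace, Complex.re_sum]
  exact Finset.sum_nonneg fun i _ => this i

lemma psd_mul_trace_re_nonneg {A B : Matrix n n ℂ} (hA : A.PosSemidef) (hB : B.PosSemidef) :
    0 ≤ (A * B).trace.re := by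
  have h1 : (hA.sqrt * B * hA.sqrt).trace = (A * B).trace := by
    rw [Matrix.trace_mul_cycle, hA.sqrt_mul_self]
  rw [← h1]
  refine psd_trace_re_nonneg ?_
  have := hB.conjTranspose_mul_mul_same hA.sqrt
  rwa [hA.posSemidef_sqrt.1.eq] at this

lemma trace_conjTranspose_mul_eq (Z W : Matrix n n ℂ) :
    (Zᴴ * W).trace = ∑ p : n × n, (starRingEnd ℂ) (Z p.1 p.2) * W p.1 p.2 := by
  rw [Matrix.trace, Fintype.sum_prod_type]
  simp only [Matrix.diag_apply, Matrix.mul_apply, Matrix.conjTranspose_apply]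
  rw [Finset.sum_comm]
  rfl

lemma trace_conjTranspose_mul_self_re_s6 (Z : Matrix n n ℂ) :
    (Zᴴ * Z).trace.re = ∑ p : n × n, ‖Z p.1 p.2‖ ^ 2 := by
  rw [trace_conjTranspose_mul_eq, Complex.re_sum]
  congr 1; ext p
  rw [mul_comm, Complex.mul_conj]
  rw [Complex.normSq_eq_norm_sq, Complex.ofReal_re]

lemma trace_re_le_CS (X Y : Matrix n n ℂ) :
    (Xᴴ * Y).trace.re ≤ Real.sqrt ((Xᴴ * X).trace.re) * Real.sqrt ((Yᴴ * Y).trace.re) := by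
  rw [trace_conjTranspose_mul_self_re_s6, trace_conjTranspose_mul_self_re_s6,
    trace_conjTranspose_mul_eq]
  calc (∑ p : n × n, (starRingEnd ℂ) (X p.1 p.2) * Y p.1 p.2).re
      ≤ ‖∑ p : n × n, (starRingEnd ℂ) (X p.1 p.2) * Y p.1 p.2‖ := Complex.re_le_norm _
    _ ≤ ∑ p : n × n, ‖(starRingEnd ℂ) (X p.1 p.2) * Y p.1 p.2‖ := norm_sum_le _ _
    _ = ∑ p : n × n, ‖X p.1 p.2‖ * ‖Y p.1 p.2‖ := by
        congr 1; ext p; rw [norm_mul, RCLike.norm_conj]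
    _ ≤ _ := Real.sum_mul_le_sqrt_mul_sqrt _ _ _

lemma traceNorm_hermitian {H : Matrix n n ℂ} (hH : H.IsHermitian) :
    traceNorm H = ∑ i, |hH.eigenvalues i| := by
  set V : Matrix n n ℂ := (hH.eigenvectorUnitary : Matrix n n ℂ) with hV
  have hV1 : star V * V = 1 := Matrix.mem_unitaryGroup_iff'.mp hH.eigenvectorUnitary.2
  have conj_mul : ∀ (A B : Matrix n n ℂ),
      (V * A * star V) * (V * B * star V) = V * (A * B) * star V := by
    intro A B
    calc (V * A * star V) * (V * B * star V) = V * A * (star V * V) * (B * star V) := by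
          noncomm_ring
      _ = V * (A * B) * star V := by rw [hV1, Matrix.mul_one]; noncomm_ring
  set D : Matrix n n ℂ := Matrix.diagonal (RCLike.ofReal ∘ hH.eigenvalues) with hD
  have hspec : H = V * D * star V := hH.spectral_theorem
  set P : Matrix n n ℂ :=
    V * Matrix.diagonal (fun i => Complex.ofReal |hH.eigenvalues i|) * star V with hP
  have hPpsd : P.PosSemidef := by
    have hdiag : (Matrix.diagonal (fun i => Complex.ofReal |hH.eigenvalues i|)).PosSemidef := by
      refine Matrix.posSemidef_diagonal_iff.mpr fun i => ?_
      exact_mod_cast Complex.zero_le_real.mpr (abs_nonneg _)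
    simpa [hP, Matrix.star_eq_conjTranspose] using hdiag.mul_mul_conjTranspose_same V
  have hP2 : P ^ 2 = Hᴴ * H := by
    rw [hH.eq, hspec, pow_two, hP, conj_mul, conj_mul, Matrix.diagonal_mul_diagonal,
      Matrix.diagonal_mul_diagonal]
    have habs2 : (fun i => Complex.ofReal |hH.eigenvalues i| * Complex.ofReal |hH.eigenvalues i|)
        = fun i => (RCLike.ofReal ∘ hH.eigenvalues) i * (RCLike.ofReal ∘ hH.eigenvalues) i := by
      funext i
      show Complex.ofReal _ * Complex.ofReal _
          = Complex.ofReal (hH.eigenvalues i) * Complex.ofReal (hH.eigenvalues i)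
      rw [← Complex.ofReal_mul, ← Complex.ofReal_mul, abs_mul_abs_self]
    rw [habs2]
  have hsqrt : P = (Matrix.posSemidef_conjTranspose_mul_self H).sqrt :=
    hPpsd.eq_sqrt_of_sq_eq (Matrix.posSemidef_conjTranspose_mul_self H) hP2
  have htr : P.trace = ∑ i, Complex.ofReal |hH.eigenvalues i| := by
    rw [hP, Matrix.trace_mul_cycle, hV1, Matrix.one_mul, Matrix.trace_diagonal]
  rw [traceNorm, ← hsqrt, htr]
  rw [Complex.re_sum]
  simp

lemma exists_sign_unitary {H : Matrix n n ℂ} (hH : H.IsHermitian) :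
    ∃ W : Matrix n n ℂ, Wᴴ * W = 1 ∧ W * Wᴴ = 1 ∧ (W * H).trace.re = traceNorm H := by
  set V : Matrix n n ℂ := (hH.eigenvectorUnitary : Matrix n n ℂ) with hV
  have hV1 : star V * V = 1 := Matrix.mem_unitaryGroup_iff'.mp hH.eigenvectorUnitary.2
  have hV2 : V * star V = 1 := Matrix.mem_unitaryGroup_iff.mp hH.eigenvectorUnitary.2
  have conj_mul : ∀ (A B : Matrix n n ℂ),
      (V * A * star V) * (V * B * star V) = V * (A * B) * star V := by
    intro A B
    calc (V * A * star V) * (V * B * star V) = V * A * (star V * V) * (B * star V) := by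
          noncomm_ring
      _ = V * (A * B) * star V := by rw [hV1, Matrix.mul_one]; noncomm_ring
  set s : n → ℂ := fun i => if hH.eigenvalues i < 0 then -1 else 1 with hs
  have hss : ∀ i, s i * s i = 1 := by
    intro i
    by_cases h : hH.eigenvalues i < 0 <;> simp [hs, h]
  have hstar : star s = s := by
    funext i
    show star (s i) = s i
    by_cases h : hH.eigenvalues i < 0 <;> simp [hs, h]
  set W : Matrix n n ℂ := V * Matrix.diagonal s * star V with hW
  have hWH : Wᴴ = W := by
    rw [hW, Matrix.conjTranspose_mul, Matrix.conjTranspose_mul,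
      Matrix.diagonal_conjTranspose, hstar, Matrix.star_eq_conjTranspose V,
      Matrix.conjTranspose_conjTranspose, Matrix.mul_assoc]
  have hWW : W * W = 1 := by
    rw [hW, conj_mul, Matrix.diagonal_mul_diagonal]
    simp only [hss]
    rw [Matrix.diagonal_one, Matrix.mul_one, hV2]
  refine ⟨W, by rw [hWH, hWW], by rw [hWH, hWW], ?_⟩
  have hspec : H = V * Matrix.diagonal (RCLike.ofReal ∘ hH.eigenvalues) * star V :=
    hH.spectral_theorem
  have htr : (W * H).trace = ∑ i, Complex.ofReal |hH.eigenvalues i| := by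
    rw [hW]
    nth_rewrite 1 [hspec]
    rw [conj_mul, Matrix.diagonal_mul_diagonal, Matrix.trace_mul_cycle, hV1,
      Matrix.one_mul, Matrix.trace_diagonal]
    congr 1
    funext i
    show s i * (RCLike.ofReal ∘ hH.eigenvalues) i = _
    show s i * Complex.ofReal (hH.eigenvalues i) = _
    by_cases h : hH.eigenvalues i < 0
    · simp [hs, h, abs_of_neg h]
    · simp [hs, h, abs_of_nonneg (not_lt.mp h)]
  rw [traceNorm_hermitian hH, htr, Complex.re_sum]
  simp

lemma unitary_conj_mul {V : Matrix n n ℂ} (hV1 : star V * V = 1) (A B : Matrix n n ℂ) :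
    (V * A * star V) * (V * B * star V) = V * (A * B) * star V := by
  calc (V * A * star V) * (V * B * star V) = V * A * (star V * V) * (B * star V) := by
        noncomm_ring
    _ = V * (A * B) * star V := by rw [hV1, Matrix.mul_one]; noncomm_ring

lemma eigenvalues_le_one {Λ : Matrix n n ℂ} (hΛ : Λ.PosSemidef)
    (hΛI : ((1 : Matrix n n ℂ) - Λ).PosSemidef) (i : n) : hΛ.1.eigenvalues i ≤ 1 := by
  set v : n → ℂ := ⇑(hΛ.1.eigenvectorBasis i) with hv
  have hv1 : dotProduct (star v) v = 1 := by
    have h2 := (orthonormal_iff_ite.mp hΛ.1.eigenvectorBasis.orthonormal) i i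
    rw [if_pos rfl, EuclideanSpace.inner_eq_star_dotProduct] at h2
    rw [dotProduct_comm] at h2; exact h2
  have hmul : Λ *ᵥ v = (hΛ.1.eigenvalues i : ℂ) • v := by
    rw [hv, hΛ.1.mulVec_eigenvectorBasis]
    ext j
    simp [Complex.real_smul]
  have h := hΛI.dotProduct_mulVec_nonneg v
  have hcomp : dotProduct (star v) (((1 : Matrix n n ℂ) - Λ) *ᵥ v)
      = 1 - (hΛ.1.eigenvalues i : ℂ) := by
    rw [Matrix.sub_mulVec, Matrix.one_mulVec, dotProduct_sub, hmul,
      dotProduct_smul, hv1]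
    simp
  rw [hcomp] at h
  have := (Complex.le_def.mp h).1
  simp at this
  linarith

lemma sqrt_mul_one_sub_sqrt_psd {Λ : Matrix n n ℂ} (hΛ : Λ.PosSemidef)
    (hΛI : ((1 : Matrix n n ℂ) - Λ).PosSemidef) :
    (hΛ.sqrt * ((1 : Matrix n n ℂ) - hΛ.sqrt)).PosSemidef := by
  set V : Matrix n n ℂ := (hΛ.1.eigenvectorUnitary : Matrix n n ℂ) with hV
  have hV1 : star V * V = 1 := Matrix.mem_unitaryGroup_iff'.mp hΛ.1.eigenvectorUnitary.2
  have hV2 : V * star V = 1 := Matrix.mem_unitaryGroup_iff.mp hΛ.1.eigenvectorUnitary.2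
  set e : n → ℂ := (↑) ∘ Real.sqrt ∘ hΛ.1.eigenvalues with he
  have hSdef : hΛ.sqrt = V * Matrix.diagonal e * star V := rfl
  have h1 : (1 : Matrix n n ℂ) - hΛ.sqrt = V * (1 - Matrix.diagonal e) * star V := by
    rw [Matrix.mul_sub, Matrix.sub_mul, Matrix.mul_one, hV2, hSdef]
  have h2 : hΛ.sqrt * ((1 : Matrix n n ℂ) - hΛ.sqrt)
      = V * (Matrix.diagonal e * (1 - Matrix.diagonal e)) * star V := by
    rw [h1, hSdef, unitary_conj_mul hV1]
  rw [h2]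
  have h3 : Matrix.diagonal e * (1 - Matrix.diagonal e)
      = Matrix.diagonal (fun i => e i * (1 - e i)) := by
    rw [Matrix.mul_sub, Matrix.mul_one, Matrix.diagonal_mul_diagonal, Matrix.diagonal_sub]
    ext i j
    by_cases h : i = j <;> simp [Matrix.diagonal_apply, h] <;> ring
  rw [h3]
  have hdiag : (Matrix.diagonal (fun i => e i * (1 - e i))).PosSemidef := by
    refine Matrix.posSemidef_diagonal_iff.mpr fun i => ?_
    have h4 : e i = Complex.ofReal (Real.sqrt (hΛ.1.eigenvalues i)) := rfl
    have h5 : (0:ℝ) ≤ Real.sqrt (hΛ.1.eigenvalues i) := Real.sqrt_nonneg _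
    have h6 : Real.sqrt (hΛ.1.eigenvalues i) ≤ 1 := by
      rw [show (1:ℝ) = Real.sqrt 1 by simp]
      exact Real.sqrt_le_sqrt (eigenvalues_le_one hΛ hΛI i)
    rw [h4, show ((1:ℂ) - Complex.ofReal (Real.sqrt (hΛ.1.eigenvalues i)))
        = Complex.ofReal (1 - Real.sqrt (hΛ.1.eigenvalues i)) by push_cast; ring,
      ← Complex.ofReal_mul]
    exact Complex.zero_le_real.mpr (by nlinarith)
  simpa [Matrix.star_eq_conjTranspose] using hdiag.mul_mul_conjTranspose_same V

end Helpers

/-- **Gentle Operator Lemma.**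
For a quantum state `ρ` and `0 ≤ Λ ≤ I`,
`‖ρ − √Λ ρ √Λ‖₁ ≤ 2 √(Tr ((I − Λ) ρ))`; in particular, if `Tr (Λ ρ) ≥ 1 − ε` with
`ε ≥ 0`, then `‖ρ − √Λ ρ √Λ‖₁ ≤ 2 √ε`. -/
theorem gentle_operator {d : ℕ} (ρ Λ : Matrix (Fin d) (Fin d) ℂ)
    (hρ : ρ.PosSemidef) (hρtr : ρ.trace = 1)
    (hΛ : Λ.PosSemidef) (hΛI : ((1 : Matrix (Fin d) (Fin d) ℂ) - Λ).PosSemidef) :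
    traceNorm (ρ - hΛ.sqrt * ρ * hΛ.sqrt)
        ≤ 2 * Real.sqrt ((((1 : Matrix (Fin d) (Fin d) ℂ) - Λ) * ρ).trace.re) ∧
    ∀ ε : ℝ, 0 ≤ ε → 1 - ε ≤ (Λ * ρ).trace.re →
      traceNorm (ρ - hΛ.sqrt * ρ * hΛ.sqrt) ≤ 2 * Real.sqrt ε := by
  set S : Matrix (Fin d) (Fin d) ℂ := hΛ.sqrt with hSdef
  have hS : S.PosSemidef := hΛ.posSemidef_sqrt
  have hSH : Sᴴ = S := hS.1.eq
  have hSS : S * S = Λ := hΛ.sqrt_mul_self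
  set R : Matrix (Fin d) (Fin d) ℂ := hρ.sqrt with hRdef
  have hRH : Rᴴ = R := hρ.posSemidef_sqrt.1.eq
  have hRR : R * R = ρ := hρ.sqrt_mul_self
  set T : Matrix (Fin d) (Fin d) ℂ := 1 - S with hTdef
  have hTH : Tᴴ = T := by
    rw [hTdef, Matrix.conjTranspose_sub, hSH, Matrix.conjTranspose_one]
  set Δ : Matrix (Fin d) (Fin d) ℂ := ρ - S * ρ * S with hΔdef
  have hΔH : Δ.IsHermitian := by
    have h2 : (S * ρ * S).IsHermitian := by
      unfold Matrix.IsHermitian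
      rw [Matrix.conjTranspose_mul, Matrix.conjTranspose_mul, hSH, hρ.1.eq, Matrix.mul_assoc]
    exact hρ.1.sub h2
  obtain ⟨W, hW1, hW2, hWtr⟩ := exists_sign_unitary hΔH
  -- trace identities
  have hρ1 : ρ.trace.re = 1 := by rw [hρtr]; simp
  have hsub : (((1 : Matrix (Fin d) (Fin d) ℂ) - Λ) * ρ).trace.re = 1 - (Λ * ρ).trace.re := by
    rw [Matrix.sub_mul, Matrix.one_mul, Matrix.trace_sub, Complex.sub_re, hρ1]
  set t : ℝ := (((1 : Matrix (Fin d) (Fin d) ℂ) - Λ) * ρ).trace.re with htdef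
  have ht0 : 0 ≤ t := psd_mul_trace_re_nonneg hΛI hρ
  have hΛρ : (Λ * ρ).trace.re ≤ 1 := by
    have h := ht0
    rw [hsub] at h
    linarith
  -- the key spectral bound : Tr(T T ρ) ≤ Tr((1-Λ) ρ)
  have hST : (S * T).PosSemidef := sqrt_mul_one_sub_sqrt_psd hΛ hΛI
  have hTT : (T * T * ρ).trace.re ≤ t := by
    have hdecomp : ((1 : Matrix (Fin d) (Fin d) ℂ) - Λ) * ρ
        = T * T * ρ + (S * T) * ρ + (S * T) * ρ := by
      rw [← hSS, hTdef]; noncomm_ring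
    have h1 : 0 ≤ ((S * T) * ρ).trace.re := psd_mul_trace_re_nonneg hST hρ
    rw [htdef, hdecomp, Matrix.trace_add, Matrix.trace_add, Complex.add_re, Complex.add_re]
    linarith
  -- Cauchy–Schwarz term 1
  have t1 : (W * (T * ρ)).trace.re
      ≤ Real.sqrt (ρ.trace.re) * Real.sqrt ((T * T * ρ).trace.re) := by
    have eX : (Wᴴ * R)ᴴ = R * W := by
      rw [Matrix.conjTranspose_mul, Matrix.conjTranspose_conjTranspose, hRH]
    have e1 : ((Wᴴ * R)ᴴ * (T * R)).trace = (W * (T * ρ)).trace := by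
      rw [eX]
      calc ((R * W) * (T * R)).trace = ((T * R) * (R * W)).trace :=
            Matrix.trace_mul_comm _ _
        _ = ((T * ρ) * W).trace := by
            rw [show (T * R) * (R * W) = T * (R * R) * W by noncomm_ring, hRR]
        _ = (W * (T * ρ)).trace := Matrix.trace_mul_comm _ _
    have e2 : ((Wᴴ * R)ᴴ * (Wᴴ * R)).trace = ρ.trace := by
      rw [eX, show (R * W) * (Wᴴ * R) = R * (W * Wᴴ) * R by noncomm_ring, hW2,
        Matrix.mul_one, hRR]
    have e3 : ((T * R)ᴴ * (T * R)).trace = (T * T * ρ).trace := by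
      rw [Matrix.conjTranspose_mul, hRH, hTH,
        show (R * T) * (T * R) = R * (T * T * R) by noncomm_ring,
        Matrix.trace_mul_comm,
        show (T * T * R) * R = T * T * (R * R) by noncomm_ring, hRR]
    have := trace_re_le_CS (Wᴴ * R) (T * R)
    rwa [e1, e2, e3] at this
  -- Cauchy–Schwarz term 2
  have t2 : (W * (S * ρ * T)).trace.re
      ≤ Real.sqrt ((Λ * ρ).trace.re) * Real.sqrt ((T * T * ρ).trace.re) := by
    have eX : (R * S * Wᴴ)ᴴ = W * (S * R) := by
      rw [Matrix.conjTranspose_mul, Matrix.conjTranspose_mul,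
        Matrix.conjTranspose_conjTranspose, hRH, hSH]
    have e1 : ((R * S * Wᴴ)ᴴ * (R * T)).trace = (W * (S * ρ * T)).trace := by
      rw [eX, show (W * (S * R)) * (R * T) = W * (S * ρ * T) by rw [← hRR]; noncomm_ring]
    have e2 : ((R * S * Wᴴ)ᴴ * (R * S * Wᴴ)).trace = (Λ * ρ).trace := by
      rw [eX, show (W * (S * R)) * (R * S * Wᴴ) = W * (S * ρ * S) * Wᴴ by
          rw [← hRR]; noncomm_ring,
        Matrix.trace_mul_cycle, hW1, Matrix.one_mul, Matrix.trace_mul_cycle, hSS]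
    have e3 : ((R * T)ᴴ * (R * T)).trace = (T * T * ρ).trace := by
      rw [Matrix.conjTranspose_mul, hRH, hTH,
        show (T * R) * (R * T) = T * (R * R) * T by noncomm_ring, hRR,
        Matrix.trace_mul_cycle]
    have := trace_re_le_CS (R * S * Wᴴ) (R * T)
    rwa [e1, e2, e3] at this
  -- assembly
  have hsplit : (W * Δ).trace.re = (W * (T * ρ)).trace.re + (W * (S * ρ * T)).trace.re := by
    rw [show W * Δ = W * (T * ρ) + W * (S * ρ * T) by rw [hΔdef, hTdef]; noncomm_ring,
      Matrix.trace_add, Complex.add_re]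
  have hmain : traceNorm Δ ≤ 2 * Real.sqrt t := by
    rw [← hWtr, hsplit]
    have b1 : (W * (T * ρ)).trace.re ≤ Real.sqrt t := by
      refine t1.trans ?_
      rw [hρ1, Real.sqrt_one, one_mul]
      exact Real.sqrt_le_sqrt hTT
    have b2 : (W * (S * ρ * T)).trace.re ≤ Real.sqrt t := by
      refine t2.trans ?_
      have h1 : Real.sqrt ((Λ * ρ).trace.re) ≤ 1 := by
        rw [show (1:ℝ) = Real.sqrt 1 by simp]
        exact Real.sqrt_le_sqrt hΛρ
      calc Real.sqrt ((Λ * ρ).trace.re) * Real.sqrt ((T * T * ρ).trace.re)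
          ≤ 1 * Real.sqrt t :=
            mul_le_mul h1 (Real.sqrt_le_sqrt hTT) (Real.sqrt_nonneg _) one_pos.le
        _ = Real.sqrt t := one_mul _
    linarith
  refine ⟨hmain, fun ε hε hεΛ => ?_⟩
  refine hmain.trans ?_
  have : t ≤ ε := by rw [hsub]; linarith
  have := Real.sqrt_le_sqrt this
  linarith
end
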